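/- Let n ≥ 1, let A be an (n+1)×(n+1) integer matrix with D = det(A) ≠ 0, and let B be the (n+1)×n integer matrix obtained by deleting the first column of A. Suppose that the rows of B generate ℤⁿ as an abelian group. If c ∈ ℤ^{n+1} is a row vector and a′ an integer such that c·A = (a′, 0, …, 0), then D divides a′. -/

import Mathlib

/-- If `A` is an `(n+1) × (n+1)` integer matrix with nonzero determinant `D`
whose last `n` columns form a matrix `B` whose rows generate `ℤⁿ` as an
abelian group, and `c · A = (a', 0, …, 0)` for an integer row vector `c`, then
`D ∣ a'`. -/
theorem statement10 (n : ℕ) (hn : 1 ≤ n)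
    (A : Matrix (Fin (n + 1)) (Fin (n + 1)) ℤ) (hD : A.det ≠ 0)
    (hB : AddSubgroup.closure
        (Set.range fun i : Fin (n + 1) => fun j : Fin n => A i j.succ) = ⊤)
    (c : Fin (n + 1) → ℤ) (a' : ℤ)
    (hc : Matrix.vecMul c A = fun j => if j = 0 then a' else 0) :
    A.det ∣ a' := by
  classical
  set B : Matrix (Fin (n + 1)) (Fin n) ℤ :=
    Matrix.of (fun i : Fin (n + 1) => fun j : Fin n => A i j.succ) with hBdef
  -- the rows of B span ℤⁿ as a ℤ-module
  have hspan : Submodule.span ℤ (Set.range B) = ⊤ := by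
    apply Submodule.toAddSubgroup_injective
    rw [Submodule.span_int_eq_addSubgroupClosure]
    simp only [Submodule.top_toAddSubgroup]
    exact hB
  have hsurj : Function.Surjective B.vecMulLinear := by
    rw [← LinearMap.range_eq_top, range_vecMulLinear]
    exact hspan
  -- choose rows t k with (t k) ᵥ* B = eₖ
  choose t ht using fun k : Fin n => hsurj (Pi.single k 1)
  -- the matrix with rows c, t 0, ..., t (n-1)
  set M : Matrix (Fin (n + 1)) (Fin (n + 1)) ℤ := Matrix.of (Fin.cons c t) with hMdef
  have key : (M * A).det = a' := by
    have h0 : ∀ j, (M * A) 0 j = if j = 0 then a' else 0 := by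
      intro j
      have : (M * A) 0 j = Matrix.vecMul c A j := by
        simp [hMdef, Matrix.mul_apply, Matrix.vecMul, dotProduct]
      rw [this, hc]
    have hsub : ∀ k l : Fin n, (M * A) k.succ l.succ = if l = k then 1 else 0 := by
      intro k l
      have h1 : (M * A) k.succ l.succ = Matrix.vecMul (t k) B l := by
        simp [hMdef, hBdef, Matrix.mul_apply, Matrix.vecMul, dotProduct]
      rw [h1]
      have := ht k
      rw [Matrix.vecMulLinear_apply] at this
      rw [this]
      simp [Pi.single_apply]
    rw [Matrix.det_succ_row_zero]
    rw [Finset.sum_eq_single 0]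
    · have : ((M * A).submatrix Fin.succ (Fin.succAbove 0)).det = 1 := by
        have : (M * A).submatrix Fin.succ (Fin.succAbove 0) = 1 := by
          ext k l
          have h2 : Fin.succAbove (0 : Fin (n + 1)) l = l.succ := rfl
          simp only [Matrix.submatrix_apply, h2, hsub]
          simp [Matrix.one_apply, eq_comm]
        rw [this, Matrix.det_one]
      rw [this, h0]
      simp
    · intro j _ hj
      rw [h0]
      simp [hj]
    · simp
  have : M.det * A.det = a' := by rw [← Matrix.det_mul, key]
  exact Dvd.intro_left M.det this
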